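/- The full binary tree of depth k has pathwidth exactly ⌈k/2⌉. -/

import Mathlib

section Upper

/-- convexity of occurrences of `w` in a list of bags -/
def Cx (w : List (Fin 2)) (L : List (Finset (List (Fin 2)))) : Prop :=
  ∀ i j l : ℕ, (h1 : i ≤ j) → (h2 : j ≤ l) → (hl : l < L.length) →
    w ∈ L[i]'(lt_of_le_of_lt (h1.trans h2) hl) → w ∈ L[l]'hl →
    w ∈ L[j]'(lt_of_le_of_lt h2 hl)

lemma cx_of_all {w L} (h : ∀ S ∈ L, w ∈ S) : Cx w L :=
  fun _ j _ _ h2 hl _ _ => h _ (L.getElem_mem (lt_of_le_of_lt h2 hl))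

lemma cx_of_none {w L} (h : ∀ S ∈ L, w ∉ S) : Cx w L :=
  fun i _ _ h1 h2 hl hi _ =>
    absurd hi (h _ (L.getElem_mem (lt_of_le_of_lt (h1.trans h2) hl)))

lemma cx_of_short {w L} (h : L.length ≤ 2) : Cx w L := by
  intro i j l h1 h2 hl hi hl2
  have : j = i ∨ j = l := by omega
  rcases this with rfl | rfl
  · exact hi
  · exact hl2

lemma cx_append {w} {A B : List (Finset (List (Fin 2)))}
    (hA : Cx w A) (hB : Cx w B)
    (hglue : (∃ S ∈ A, w ∈ S) → (∃ S ∈ B, w ∈ S) →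
      ∀ (ha : 0 < A.length) (hb : 0 < B.length),
        w ∈ A[A.length - 1]'(by omega) ∧ w ∈ B[0]'hb) :
    Cx w (A ++ B) := by
  intro i j l h1 h2 hl hi hlm
  have hlen : (A ++ B).length = A.length + B.length := List.length_append
  by_cases hlA : l < A.length
  · have hiA : i < A.length := by omega
    have hjA : j < A.length := by omega
    rw [List.getElem_append_left hiA] at hi
    rw [List.getElem_append_left hlA] at hlm
    rw [List.getElem_append_left hjA]
    exact hA i j l h1 h2 hlA hi hlm
  · by_cases hiA : i < A.length
    · -- i in A, l in B
      have hlB : l - A.length < B.length := by omega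
      rw [List.getElem_append_left hiA] at hi
      rw [List.getElem_append_right (by omega)] at hlm
      have hexA : ∃ S ∈ A, w ∈ S := ⟨_, A.getElem_mem hiA, hi⟩
      have hexB : ∃ S ∈ B, w ∈ S := ⟨_, B.getElem_mem hlB, hlm⟩
      obtain ⟨hlast, hhead⟩ := hglue hexA hexB (by omega) (by omega)
      by_cases hjA : j < A.length
      · rw [List.getElem_append_left hjA]
        exact hA i j (A.length - 1) h1 (by omega) (by omega) hi hlast
      · rw [List.getElem_append_right (by omega)]
        exact hB 0 (j - A.length) (l - A.length) (by omega) (by omega)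
          (by omega) hhead hlm
    · -- all in B
      have hiB : A.length ≤ i := by omega
      rw [List.getElem_append_right (by omega)] at hi
      rw [List.getElem_append_right (by omega)] at hlm
      rw [List.getElem_append_right (by omega)]
      exact hB (i - A.length) (j - A.length) (l - A.length) (by omega) (by omega)
        (by omega) hi hlm

lemma cx_map_insert {w L} (u : List (Fin 2)) (h : Cx w L) :
    Cx w (L.map (insert u)) := by
  by_cases hw : w = u
  · subst hw
    refine cx_of_all fun S hS => ?_
    obtain ⟨T, _, rfl⟩ := List.mem_map.mp hS
    exact Finset.mem_insert_self _ _
  · intro i j l h1 h2 hl hi hlm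
    simp only [List.length_map] at hl
    simp only [List.getElem_map, Finset.mem_insert, hw, false_or] at hi hlm ⊢
    exact h i j l h1 h2 hl hi hlm

lemma cx_reverse {w L} (h : Cx w L) : Cx w L.reverse := by
  intro i j l h1 h2 hl hi hlm
  simp only [List.length_reverse] at hl
  simp only [List.getElem_reverse] at hi hlm ⊢
  exact h (L.length - 1 - l) (L.length - 1 - j) (L.length - 1 - i)
    (by omega) (by omega) (by omega) hlm hi

end Upper

section Decomp

def Ebags : ℕ → List (Fin 2) → List (Finset (List (Fin 2)))
  | 0, v => [{v}]
  | m+1, v =>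
      ((Ebags m ((v ++ [0]) ++ [0]) ++ Ebags m ((v ++ [0]) ++ [1])).map
          (insert (v ++ [0]))).reverse
        ++ [{v ++ [0], v}, {v, v ++ [1]}]
        ++ (Ebags m ((v ++ [1]) ++ [0]) ++ Ebags m ((v ++ [1]) ++ [1])).map
          (insert (v ++ [1]))

def Obags (m : ℕ) (u : List (Fin 2)) : List (Finset (List (Fin 2))) :=
  (Ebags m (u ++ [0]) ++ Ebags m (u ++ [1])).map (insert u)

lemma Ebags_succ (m : ℕ) (v : List (Fin 2)) : Ebags (m+1) v =
    (Obags m (v ++ [0])).reverse ++ [{v ++ [0], v}, {v, v ++ [1]}]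
      ++ Obags m (v ++ [1]) := rfl

lemma Ebags_ne (m : ℕ) (v : List (Fin 2)) : Ebags m v ≠ [] := by
  cases m <;> simp [Ebags, Obags]

lemma Obags_ne (m : ℕ) (u : List (Fin 2)) : Obags m u ≠ [] := by
  simp [Obags, Ebags_ne]

lemma append_disj {u s t : List (Fin 2)} {a b : Fin 2} (hab : a ≠ b) :
    (u ++ [a]) ++ s ≠ (u ++ [b]) ++ t := by
  intro h
  rw [List.append_assoc, List.append_assoc] at h
  have h2 := List.append_cancel_left h
  simp only [List.singleton_append, List.cons.injEq] at h2
  exact hab h2.1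

lemma ne_append {v s : List (Fin 2)} {a : Fin 2} : v ≠ (v ++ [a]) ++ s := by
  intro h
  have := congrArg List.length h
  simp at this

lemma Ebags_sub : ∀ (m : ℕ) (v : List (Fin 2)), ∀ S ∈ Ebags m v, ∀ w ∈ S,
    ∃ s, w = v ++ s ∧ s.length ≤ 2*m := by
  intro m
  induction m with
  | zero =>
      intro v S hS w hw
      simp only [Ebags, List.mem_singleton] at hS
      subst hS
      simp only [Finset.mem_singleton] at hw
      exact ⟨[], by simp [hw]⟩
  | succ m ih =>
      intro v S hS w hw
      rw [Ebags_succ] at hS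
      simp only [List.mem_append, List.mem_reverse, List.mem_cons,
        List.mem_singleton, List.not_mem_nil, or_false] at hS
      have hO : ∀ (b : Fin 2), S ∈ Obags m (v ++ [b]) →
          ∃ s, w = v ++ s ∧ s.length ≤ 2*(m+1) := by
        intro b hSO
        simp only [Obags, List.mem_map, List.mem_append] at hSO
        obtain ⟨T, hT, rfl⟩ := hSO
        rcases Finset.mem_insert.mp hw with rfl | hwT
        · exact ⟨[b], by simp; omega⟩
        · rcases hT with hT | hT
          · obtain ⟨s, rfl, hs⟩ := ih _ T hT w hwT
            exact ⟨[b] ++ ([0] ++ s), by simp; omega⟩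
          · obtain ⟨s, rfl, hs⟩ := ih _ T hT w hwT
            exact ⟨[b] ++ ([1] ++ s), by simp; omega⟩
      rcases hS with (hS | hS | hS) | hS
      · exact hO 0 hS
      · subst hS
        rcases Finset.mem_insert.mp hw with rfl | hw
        · exact ⟨[0], by simp; omega⟩
        · simp only [Finset.mem_singleton] at hw
          exact ⟨[], by simp [hw]⟩
      · subst hS
        rcases Finset.mem_insert.mp hw with rfl | hw
        · exact ⟨[], by simp⟩
        · simp only [Finset.mem_singleton] at hw
          exact ⟨[1], by simp [hw]; omega⟩
      · exact hO 1 hS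

lemma Obags_sub (m : ℕ) (u : List (Fin 2)) : ∀ S ∈ Obags m u, ∀ w ∈ S,
    ∃ s, w = u ++ s ∧ s.length ≤ 2*m + 1 := by
  intro S hS w hw
  simp only [Obags, List.mem_map, List.mem_append] at hS
  obtain ⟨T, hT, rfl⟩ := hS
  rcases Finset.mem_insert.mp hw with rfl | hwT
  · exact ⟨[], by simp⟩
  · rcases hT with hT | hT
    · obtain ⟨s, rfl, hs⟩ := Ebags_sub m _ T hT w hwT
      exact ⟨[0] ++ s, by simp; omega⟩
    · obtain ⟨s, rfl, hs⟩ := Ebags_sub m _ T hT w hwT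
      exact ⟨[1] ++ s, by simp; omega⟩

lemma Obags_root_mem (m : ℕ) (u : List (Fin 2)) : ∀ S ∈ Obags m u, u ∈ S := by
  intro S hS
  simp only [Obags, List.mem_map] at hS
  obtain ⟨T, _, rfl⟩ := hS
  exact Finset.mem_insert_self _ _

end Decomp

section Props

lemma mem_Ebags_succ_O {m : ℕ} {v : List (Fin 2)} {S} (b : Fin 2)
    (h : S ∈ Obags m (v ++ [b])) : S ∈ Ebags (m+1) v := by
  rw [Ebags_succ]
  fin_cases b
  · simp only [List.mem_append, List.mem_reverse]
    left; left; exact h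
  · simp only [List.mem_append]
    right; exact h

lemma mem_Ebags_succ_mid1 {m : ℕ} {v : List (Fin 2)} :
    ({v ++ [0], v} : Finset (List (Fin 2))) ∈ Ebags (m+1) v := by
  rw [Ebags_succ]; simp

lemma mem_Ebags_succ_mid2 {m : ℕ} {v : List (Fin 2)} :
    ({v, v ++ [1]} : Finset (List (Fin 2))) ∈ Ebags (m+1) v := by
  rw [Ebags_succ]; simp

lemma Obags_cover_aux (m : ℕ) (u : List (Fin 2))
    (ih : ∀ (x : List (Fin 2)) (s : List (Fin 2)), s.length ≤ 2*m →
      ∃ S ∈ Ebags m x, x ++ s ∈ S) :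
    ∀ s : List (Fin 2), s.length ≤ 2*m + 1 → ∃ S ∈ Obags m u, u ++ s ∈ S := by
  intro s hs
  match s with
  | [] =>
      obtain ⟨T, hT⟩ := List.exists_mem_of_ne_nil _ (Ebags_ne m (u ++ [0]))
      refine ⟨insert u T, ?_, by simp⟩
      simp only [Obags, List.mem_map]
      exact ⟨T, List.mem_append_left _ hT, rfl⟩
  | c :: t =>
      have ht : t.length ≤ 2*m := by simp at hs; omega
      obtain ⟨T, hT, hmem⟩ := ih (u ++ [c]) t ht
      refine ⟨insert u T, ?_, ?_⟩
      · simp only [Obags, List.mem_map]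
        refine ⟨T, ?_, rfl⟩
        fin_cases c
        · exact List.mem_append_left _ hT
        · exact List.mem_append_right _ hT
      · refine Finset.mem_insert_of_mem ?_
        have : u ++ (c :: t) = (u ++ [c]) ++ t := by simp
        rw [this]; exact hmem

lemma Ebags_cover : ∀ (m : ℕ) (v : List (Fin 2)) (s : List (Fin 2)),
    s.length ≤ 2*m → ∃ S ∈ Ebags m v, v ++ s ∈ S := by
  intro m
  induction m with
  | zero =>
      intro v s hs
      have : s = [] := List.eq_nil_of_length_eq_zero (by omega)
      subst this
      exact ⟨{v}, by simp [Ebags], by simp⟩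
  | succ m ih =>
      intro v s hs
      match s with
      | [] => exact ⟨{v ++ [0], v}, mem_Ebags_succ_mid1, by simp⟩
      | b :: t =>
          have ht : t.length ≤ 2*m + 1 := by simp at hs; omega
          obtain ⟨S, hS, hmem⟩ := Obags_cover_aux m (v ++ [b]) ih t ht
          refine ⟨S, mem_Ebags_succ_O b hS, ?_⟩
          have : v ++ (b :: t) = (v ++ [b]) ++ t := by simp
          rw [this]; exact hmem

lemma Obags_edge_aux (m : ℕ) (u : List (Fin 2))
    (ihE : ∀ (x s : List (Fin 2)) (j : Fin 2), s.length < 2*m →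
      ∃ S ∈ Ebags m x, x ++ s ∈ S ∧ (x ++ s) ++ [j] ∈ S) :
    ∀ (t : List (Fin 2)) (j : Fin 2), t.length < 2*m + 1 →
      ∃ S ∈ Obags m u, u ++ t ∈ S ∧ (u ++ t) ++ [j] ∈ S := by
  intro t j ht
  match t with
  | [] =>
      obtain ⟨T, hT, hmem⟩ := Ebags_cover m (u ++ [j]) [] (by simp)
      refine ⟨insert u T, ?_, by simp, ?_⟩
      · simp only [Obags, List.mem_map]
        refine ⟨T, ?_, rfl⟩
        fin_cases j
        · exact List.mem_append_left _ hT
        · exact List.mem_append_right _ hT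
      · refine Finset.mem_insert_of_mem ?_
        simpa using hmem
  | c :: t' =>
      have ht' : t'.length < 2*m := by simp at ht; omega
      obtain ⟨T, hT, hm1, hm2⟩ := ihE (u ++ [c]) t' j ht'
      refine ⟨insert u T, ?_, ?_, ?_⟩
      · simp only [Obags, List.mem_map]
        refine ⟨T, ?_, rfl⟩
        fin_cases c
        · exact List.mem_append_left _ hT
        · exact List.mem_append_right _ hT
      · have : u ++ (c :: t') = (u ++ [c]) ++ t' := by simp
        rw [this]; exact Finset.mem_insert_of_mem hm1
      · have : (u ++ (c :: t')) ++ [j] = ((u ++ [c]) ++ t') ++ [j] := by simp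
        rw [this]; exact Finset.mem_insert_of_mem hm2

end Props

lemma Ebags_edge : ∀ (m : ℕ) (v : List (Fin 2)) (s : List (Fin 2)) (j : Fin 2),
    s.length < 2*m → ∃ S ∈ Ebags m v, v ++ s ∈ S ∧ (v ++ s) ++ [j] ∈ S := by
  intro m
  induction m with
  | zero => intro v s j hs; omega
  | succ m ih =>
      intro v s j hs
      match s with
      | [] =>
          fin_cases j
          · exact ⟨{v ++ [0], v}, mem_Ebags_succ_mid1, by simp, by simp⟩
          · exact ⟨{v, v ++ [1]}, mem_Ebags_succ_mid2, by simp, by simp⟩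
      | b :: t =>
          have ht : t.length < 2*m + 1 := by simp at hs; omega
          obtain ⟨S, hS, hm1, hm2⟩ := Obags_edge_aux m (v ++ [b]) ih t j ht
          refine ⟨S, mem_Ebags_succ_O b hS, ?_, ?_⟩
          · have : v ++ (b :: t) = (v ++ [b]) ++ t := by simp
            rw [this]; exact hm1
          · have : (v ++ (b :: t)) ++ [j] = ((v ++ [b]) ++ t) ++ [j] := by simp
            rw [this]; exact hm2

lemma Ebags_card : ∀ (m : ℕ) (v : List (Fin 2)), ∀ S ∈ Ebags m v,
    S.card ≤ m + 1 := by
  intro m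
  induction m with
  | zero =>
      intro v S hS
      simp only [Ebags, List.mem_singleton] at hS
      subst hS; simp
  | succ m ih =>
      intro v S hS
      rw [Ebags_succ] at hS
      simp only [List.mem_append, List.mem_reverse, List.mem_cons,
        List.mem_singleton, List.not_mem_nil, or_false] at hS
      have hO : ∀ (b : Fin 2), S ∈ Obags m (v ++ [b]) → S.card ≤ m + 2 := by
        intro b hSO
        simp only [Obags, List.mem_map, List.mem_append] at hSO
        obtain ⟨T, hT, rfl⟩ := hSO
        have hTc : T.card ≤ m + 1 := by
          rcases hT with hT | hT
          · exact ih _ T hT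
          · exact ih _ T hT
        calc (insert (v ++ [b]) T).card ≤ T.card + 1 := Finset.card_insert_le _ _
          _ ≤ m + 2 := by omega
      rcases hS with (hS | hS | hS) | hS
      · exact hO 0 hS
      · subst hS
        calc ({v ++ [0], v} : Finset (List (Fin 2))).card ≤ 2 :=
              Finset.card_insert_le _ _ |>.trans (by simp)
          _ ≤ m + 2 := by omega
      · subst hS
        calc ({v, v ++ [1]} : Finset (List (Fin 2))).card ≤ 2 :=
              Finset.card_insert_le _ _ |>.trans (by simp)
          _ ≤ m + 2 := by omega
      · exact hO 1 hS

lemma Obags_card (m : ℕ) (u : List (Fin 2)) : ∀ S ∈ Obags m u,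
    S.card ≤ m + 2 := by
  intro S hS
  simp only [Obags, List.mem_map, List.mem_append] at hS
  obtain ⟨T, hT, rfl⟩ := hS
  have hTc : T.card ≤ m + 1 := by
    rcases hT with hT | hT
    · exact Ebags_card m _ T hT
    · exact Ebags_card m _ T hT
  calc (insert u T).card ≤ T.card + 1 := Finset.card_insert_le _ _
    _ ≤ m + 2 := by omega

lemma Obags_cx (m : ℕ) (u : List (Fin 2))
    (ihE : ∀ (x w : List (Fin 2)), Cx w (Ebags m x)) (w : List (Fin 2)) :
    Cx w (Obags m u) := by
  apply cx_map_insert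
  refine cx_append (ihE _ w) (ihE _ w) ?_
  rintro ⟨S0, hS0, hw0⟩ ⟨S1, hS1, hw1⟩ ha hb
  exfalso
  obtain ⟨s0, heq0, -⟩ := Ebags_sub m _ S0 hS0 w hw0
  obtain ⟨s1, heq1, -⟩ := Ebags_sub m _ S1 hS1 w hw1
  exact append_disj (by decide : (0 : Fin 2) ≠ 1) (heq0 ▸ heq1)

lemma Ebags_cx : ∀ (m : ℕ) (v w : List (Fin 2)), Cx w (Ebags m v) := by
  intro m
  induction m with
  | zero => intro v w; exact cx_of_short (by simp [Ebags])
  | succ m ih =>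
      intro v w
      have hrw : Ebags (m+1) v = (Obags m (v ++ [0])).reverse ++
          ([{v ++ [0], v}, {v, v ++ [1]}] ++ Obags m (v ++ [1])) := by
        rw [Ebags_succ, List.append_assoc]
      rw [hrw]
      refine cx_append (cx_reverse (Obags_cx m _ ih w)) ?_ ?_
      · -- Cx on [M1, M2] ++ O1
        refine cx_append (cx_of_short (by simp)) (Obags_cx m _ ih w) ?_
        rintro ⟨S1, hS1, hw1⟩ ⟨S2, hS2, hw2⟩ ha hb
        obtain ⟨s, rfl, -⟩ := Obags_sub m _ S2 hS2 w hw2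
        have hw_eq : (v ++ [1]) ++ s = v ++ [1] := by
          have hS1' : S1 = {v ++ [0], v} ∨ S1 = {v, v ++ [1]} := by simpa using hS1
          rcases hS1' with rfl | rfl
          · rcases Finset.mem_insert.mp hw1 with h | h
            · have h2 : (v ++ [1]) ++ s = (v ++ [0]) ++ ([] : List (Fin 2)) := by
                simpa using h
              exact ((append_disj (by decide : (1:Fin 2) ≠ 0)) h2).elim
            · exact (ne_append (Finset.mem_singleton.mp h).symm).elim
          · rcases Finset.mem_insert.mp hw1 with h | h
            · exact (ne_append h.symm).elim
            · exact Finset.mem_singleton.mp h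
        refine ⟨?_, ?_⟩
        · rw [hw_eq]; simp
        · rw [hw_eq]
          exact Obags_root_mem _ _ _ (List.getElem_mem _)
      · rintro ⟨S0, hS0, hw0⟩ ⟨S', hS', hw'⟩ ha hb
        rw [List.mem_reverse] at hS0
        obtain ⟨s, rfl, -⟩ := Obags_sub m _ S0 hS0 w hw0
        have hw_eq : (v ++ [0]) ++ s = v ++ [0] := by
          rcases List.mem_append.mp hS' with hS'' | hS''
          · have hS3 : S' = {v ++ [0], v} ∨ S' = {v, v ++ [1]} := by simpa using hS''
            rcases hS3 with rfl | rfl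
            · rcases Finset.mem_insert.mp hw' with h | h
              · exact h
              · exact (ne_append (Finset.mem_singleton.mp h).symm).elim
            · rcases Finset.mem_insert.mp hw' with h | h
              · exact (ne_append h.symm).elim
              · have h2 : (v ++ [0]) ++ s = (v ++ [1]) ++ ([] : List (Fin 2)) := by
                  simpa using Finset.mem_singleton.mp h
                exact ((append_disj (by decide : (0:Fin 2) ≠ 1)) h2).elim
          · obtain ⟨t, heq, -⟩ := Obags_sub m _ S' hS'' _ hw'
            exact ((append_disj (by decide : (0:Fin 2) ≠ 1)) heq).elim
        refine ⟨?_, ?_⟩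
        · rw [hw_eq]
          exact Obags_root_mem _ _ _ (List.mem_reverse.mp (List.getElem_mem _))
        · have h0 : ([{v ++ [0], v}, {v, v ++ [1]}] ++ Obags m (v ++ [1]))[0]'(by simp) =
              {v ++ [0], v} := by
            rw [List.getElem_append_left (by simp)]
            rfl
          rw [h0, hw_eq]
          simp

section Lower
variable {k n : ℕ} {B : Fin (n+1) → Finset (List (Fin 2))}

/-- Connectivity through common bags, staying inside `P`. -/
def Rch (B : Fin (n+1) → Finset (List (Fin 2))) (P : List (Fin 2) → Prop) :
    List (Fin 2) → List (Fin 2) → Prop :=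
  Relation.ReflTransGen (fun a b => (∃ i, a ∈ B i ∧ b ∈ B i) ∧ P a ∧ P b)

lemma rch_symm {P : List (Fin 2) → Prop} {x y} (h : Rch B P x y) : Rch B P y x :=
  @Std.Symm.symm _ _ (@Relation.ReflTransGen.stdSymm _ _
    ⟨fun _ _ h => ⟨⟨h.1.choose, h.1.choose_spec.2, h.1.choose_spec.1⟩, h.2.2, h.2.1⟩⟩) _ _ h

lemma rch_sep
    (h4 : ∀ i j l : Fin (n+1), i ≤ j → j ≤ l → ∀ v, v ∈ B i → v ∈ B l → v ∈ B j)
    {P : List (Fin 2) → Prop} {x y} (hxy : Rch B P x y) (hx : P x) :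
    ∀ a b c : Fin (n+1), a ≤ b → b ≤ c → x ∈ B a → y ∈ B c →
      ∃ z, P z ∧ z ∈ B b := by
  induction hxy with
  | refl =>
      intro a b c hab hbc hxa hxc
      exact ⟨x, hx, h4 a b c hab hbc x hxa hxc⟩
  | tail hsteps hstep ih =>
      obtain ⟨⟨j, hyj', hyj⟩, hPy', hPy⟩ := hstep
      intro a b c hab hbc hxa hyc
      rcases le_total j b with hjb | hbj
      · exact ⟨_, hPy, h4 j b c hjb hbc _ hyj hyc⟩
      · exact ih a b j hab hbj hxa hyj'

lemma rch_append
    (h3 : ∀ (v : List (Fin 2)) (j : Fin 2), v.length < k → ∃ i, v ∈ B i ∧ v ++ [j] ∈ B i)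
    {P : List (Fin 2) → Prop} (r s : List (Fin 2)) (hlen : r.length + s.length ≤ k)
    (hP : ∀ t, t <+: s → P (r ++ t)) : Rch B P r (r ++ s) := by
  induction s using List.reverseRecOn with
  | nil => rw [List.append_nil]; exact Relation.ReflTransGen.refl
  | append_singleton t j ih =>
      have h1 : (r ++ t).length < k := by
        simp only [List.length_append, List.length_singleton] at hlen ⊢; omega
      obtain ⟨i, hi1, hi2⟩ := h3 (r ++ t) j h1
      have hstep : Rch B P r (r ++ t) := by
        refine ih ?_ ?_
        · simp only [List.length_append, List.length_singleton] at hlen ⊢; omega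
        · exact fun t' ht' => hP t' (ht'.trans ⟨[j], rfl⟩)
      refine hstep.tail ⟨⟨i, hi1, ?_⟩, hP t ⟨[j], rfl⟩, hP (t ++ [j]) List.prefix_rfl⟩
      rwa [← List.append_assoc]

end Lower

open scoped Classical in
lemma lower_claim {k n : ℕ} {B : Fin (n+1) → Finset (List (Fin 2))}
    (h2 : ∀ v : List (Fin 2), v.length ≤ k → ∃ i, v ∈ B i)
    (h3 : ∀ (v : List (Fin 2)) (j : Fin 2), v.length < k → ∃ i, v ∈ B i ∧ v ++ [j] ∈ B i)
    (h4 : ∀ i j l : Fin (n+1), i ≤ j → j ≤ l → ∀ v, v ∈ B i → v ∈ B l → v ∈ B j) :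
    ∀ (d : ℕ) (v : List (Fin 2)), v.length + d ≤ k →
      ∃ i, (d+1)/2 + 1 ≤
        ((B i).filter (fun w => v <+: w ∧ w.length ≤ v.length + d)).card := by
  intro d
  induction d using Nat.strong_induction_on with
  | _ d ih =>
  match d with
  | 0 =>
      intro v hv
      obtain ⟨i, hi⟩ := h2 v (by omega)
      refine ⟨i, ?_⟩
      have : v ∈ (B i).filter (fun w => v <+: w ∧ w.length ≤ v.length + 0) := by
        simp [Finset.mem_filter, hi]
      calc (0+1)/2 + 1 = ({v} : Finset (List (Fin 2))).card := by simp
        _ ≤ _ := Finset.card_le_card (by simpa using this)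
  | 1 =>
      intro v hv
      obtain ⟨i, hi1, hi2⟩ := h3 v 0 (by omega)
      refine ⟨i, ?_⟩
      have hsub : ({v, v ++ [0]} : Finset (List (Fin 2))) ⊆
          (B i).filter (fun w => v <+: w ∧ w.length ≤ v.length + 1) := by
        intro w hw
        simp only [Finset.mem_insert, Finset.mem_singleton] at hw
        rcases hw with rfl | rfl <;> simp [Finset.mem_filter, hi1, hi2]
      have hne : v ≠ v ++ [0] := by simp
      calc (1+1)/2 + 1 = ({v, v ++ [0]} : Finset (List (Fin 2))).card := by
            rw [Finset.card_pair hne]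
        _ ≤ _ := Finset.card_le_card hsub
  | (e+2) =>
      intro v hv
      -- the three subtree roots
      have hsub : ∀ s : List (Fin 2), s.length = 2 →
          ∃ i, (e+1)/2 + 1 ≤
            ((B i).filter (fun w => (v ++ s) <+: w ∧
              w.length ≤ v.length + 2 + e)).card := by
        intro s hs
        obtain ⟨i, hi⟩ := ih e (by omega) (v ++ s)
          (by simp only [List.length_append, hs]; omega)
        refine ⟨i, ?_⟩
        simpa [List.length_append, hs, Nat.add_assoc] using hi
      obtain ⟨i1, hi1⟩ := hsub [0,0] rfl
      obtain ⟨i2, hi2⟩ := hsub [0,1] rfl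
      obtain ⟨i3, hi3⟩ := hsub [1,0] rfl
      -- main middle-bag argument
      have main : ∀ (a m c : Fin (n+1)) (sa sm sc : List (Fin 2)),
          a ≤ m → m ≤ c → sa.length = 2 → sm.length = 2 → sc.length = 2 →
          sm ≠ sa → sm ≠ sc →
          (∃ x ∈ B a, (v ++ sa) <+: x ∧ x.length ≤ v.length + 2 + e) →
          (∃ y ∈ B c, (v ++ sc) <+: y ∧ y.length ≤ v.length + 2 + e) →
          ((e+1)/2 + 1 ≤
            ((B m).filter (fun w => (v ++ sm) <+: w ∧
              w.length ≤ v.length + 2 + e)).card) →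
          ∃ i, (e+2+1)/2 + 1 ≤
            ((B i).filter (fun w => v <+: w ∧ w.length ≤ v.length + (e+2))).card := by
        intro a m c sa sm sc ham hmc hsa hsm hsc hmsa hmsc hx hy hcard
        obtain ⟨x, hxa, hxpre, hxlen⟩ := hx
        obtain ⟨y, hyc, hypre, hylen⟩ := hy
        set P : List (Fin 2) → Prop := fun w =>
          v <+: w ∧ w.length ≤ v.length + 2 + e ∧ ¬ (v ++ sm) <+: w with hP
        -- not-prefix helpers
        have h_np1 : ∀ t : List (Fin 2), t.length ≤ 2 → t ≠ sm →
            ¬ (v ++ sm) <+: (v ++ t) := by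
          intro t ht htne hpre
          have hlen := hpre.length_le
          simp only [List.length_append, hsm] at hlen
          have : t.length = 2 := by omega
          have h5 := hpre.eq_of_length (by simp [hsm, this])
          exact htne (List.append_cancel_left h5).symm
        have h_np2 : ∀ (s t : List (Fin 2)), s.length = 2 → s ≠ sm →
            ¬ (v ++ sm) <+: ((v ++ s) ++ t) := by
          intro s t hslen hsne hpre
          have h1 : (v ++ s) <+: ((v ++ s) ++ t) := List.prefix_append _ _
          have h2 : (v ++ sm) <+: (v ++ s) :=
            List.prefix_of_prefix_length_le hpre h1
              (by simp [hsm, hslen])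
          have h5 := h2.eq_of_length (by simp [hsm, hslen])
          exact hsne (List.append_cancel_left h5).symm
        have hk2 : v.length + 2 ≤ k := by omega
        -- chains from roots up to vertices, and v to roots
        have hroot : ∀ s : List (Fin 2), s.length = 2 → s ≠ sm →
            Rch B P v (v ++ s) := by
          intro s hslen hsne
          refine rch_append h3 v s (by omega) ?_
          intro t' ht'
          simp only [hP]
          refine ⟨List.prefix_append _ _, by
            have := ht'.length_le; simp only [List.length_append]; omega, ?_⟩
          refine h_np1 t' (by have := ht'.length_le; omega) ?_
          rintro rfl
          exact hsne (ht'.eq_of_length (by omega)).symm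
        have hup : ∀ (s t : List (Fin 2)), s.length = 2 → s ≠ sm →
            (v.length + 2 + t.length ≤ v.length + 2 + e) →
            Rch B P (v ++ s) ((v ++ s) ++ t) := by
          intro s t hslen hsne hlt
          refine rch_append h3 (v ++ s) t
            (by simp only [List.length_append, hslen]; omega) ?_
          intro t' ht'
          simp only [hP]
          refine ⟨(List.prefix_append v s).trans (List.prefix_append _ _), by
            have := ht'.length_le
            simp only [List.length_append, hslen]; omega,
            h_np2 s t' hslen hsne⟩
        obtain ⟨tx, rfl⟩ := hxpre
        obtain ⟨ty, rfl⟩ := hypre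
        have hsane : sa ≠ sm := fun h => hmsa h.symm
        have hscne : sc ≠ sm := fun h => hmsc h.symm
        have htxlen : v.length + 2 + tx.length ≤ v.length + 2 + e := by
          have := hxlen; simp only [List.length_append, hsa] at this; omega
        have htylen : v.length + 2 + ty.length ≤ v.length + 2 + e := by
          have := hylen; simp only [List.length_append, hsc] at this; omega
        have chain : Rch B P ((v ++ sa) ++ tx) ((v ++ sc) ++ ty) :=
          ((rch_symm (hup sa tx hsa hsane htxlen)).trans
            (rch_symm (hroot sa hsa hsane))).trans
            ((hroot sc hsc hscne).trans (hup sc ty hsc hscne htylen))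
        have Px : P ((v ++ sa) ++ tx) := by
          simp only [hP]
          exact ⟨(List.prefix_append v sa).trans (List.prefix_append _ _),
            by have := hxlen; simp only [List.length_append, hsa] at this ⊢; omega,
            h_np2 sa tx hsa hsane⟩
        obtain ⟨z, hPz, hzm⟩ :=
          rch_sep h4 chain Px a m c ham hmc hxa hyc
        rw [hP] at hPz
        obtain ⟨hzpre, hzlen, hznm⟩ := hPz
        refine ⟨m, ?_⟩
        set F := (B m).filter (fun w => (v ++ sm) <+: w ∧
          w.length ≤ v.length + 2 + e) with hF
        have hzF : z ∉ F := by
          simp only [hF, Finset.mem_filter]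
          tauto
        have hins : insert z F ⊆
            (B m).filter (fun w => v <+: w ∧ w.length ≤ v.length + (e+2)) := by
          intro w hw
          rcases Finset.mem_insert.mp hw with rfl | hwF
          · exact Finset.mem_filter.mpr ⟨hzm, hzpre, by omega⟩
          · obtain ⟨hwB, hwpre, hwlen⟩ := Finset.mem_filter.mp hwF
            exact Finset.mem_filter.mpr
              ⟨hwB, (List.prefix_append v sm).trans hwpre, by omega⟩
        calc (e+2+1)/2 + 1 ≤ ((e+1)/2 + 1) + 1 := by omega
          _ ≤ F.card + 1 := by omega
          _ = (insert z F).card := (Finset.card_insert_of_notMem hzF).symm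
          _ ≤ _ := Finset.card_le_card hins

      have wit : ∀ (i : Fin (n+1)) (s : List (Fin 2)),
          (e+1)/2 + 1 ≤ ((B i).filter (fun w => (v ++ s) <+: w ∧
            w.length ≤ v.length + 2 + e)).card →
          ∃ x ∈ B i, (v ++ s) <+: x ∧ x.length ≤ v.length + 2 + e := by
        intro i s h
        have hpos : 0 < ((B i).filter (fun w => (v ++ s) <+: w ∧
            w.length ≤ v.length + 2 + e)).card := by omega
        obtain ⟨x, hx⟩ := Finset.card_pos.mp hpos
        obtain ⟨h1, h2, h3⟩ := Finset.mem_filter.mp hx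
        exact ⟨x, h1, h2, h3⟩
      rcases le_total i1 i2 with h12 | h21
      · rcases le_total i2 i3 with h23 | h32
        · exact main i1 i2 i3 [0,0] [0,1] [1,0] h12 h23 rfl rfl rfl
            (by decide) (by decide) (wit _ _ hi1) (wit _ _ hi3) hi2
        · rcases le_total i1 i3 with h13 | h31
          · exact main i1 i3 i2 [0,0] [1,0] [0,1] h13 h32 rfl rfl rfl
              (by decide) (by decide) (wit _ _ hi1) (wit _ _ hi2) hi3
          · exact main i3 i1 i2 [1,0] [0,0] [0,1] h31 h12 rfl rfl rfl
              (by decide) (by decide) (wit _ _ hi3) (wit _ _ hi2) hi1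
      · rcases le_total i1 i3 with h13 | h31
        · exact main i2 i1 i3 [0,1] [0,0] [1,0] h21 h13 rfl rfl rfl
            (by decide) (by decide) (wit _ _ hi2) (wit _ _ hi3) hi1
        · rcases le_total i2 i3 with h23 | h32
          · exact main i2 i3 i1 [0,1] [1,0] [0,0] h23 h31 rfl rfl rfl
              (by decide) (by decide) (wit _ _ hi2) (wit _ _ hi1) hi3
          · exact main i3 i2 i1 [1,0] [0,1] [0,0] h32 h21 rfl rfl rfl
              (by decide) (by decide) (wit _ _ hi3) (wit _ _ hi1) hi2

section Assemble

lemma assemble {k p : ℕ} (L : List (Finset (List (Fin 2)))) (hne : L ≠ [])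
    (hsub : ∀ S ∈ L, ∀ w ∈ S, w.length ≤ k)
    (hcov : ∀ w : List (Fin 2), w.length ≤ k → ∃ S ∈ L, w ∈ S)
    (hedge : ∀ (w : List (Fin 2)) (j : Fin 2), w.length < k →
      ∃ S ∈ L, w ∈ S ∧ w ++ [j] ∈ S)
    (hcx : ∀ w, Cx w L)
    (hcard : ∀ S ∈ L, S.card ≤ p + 1) :
    ∃ (n : ℕ) (B : Fin (n + 1) → Finset (List (Fin 2))),
      (∀ i, ∀ v ∈ B i, v.length ≤ k) ∧
      (∀ v : List (Fin 2), v.length ≤ k → ∃ i, v ∈ B i) ∧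
      (∀ (v : List (Fin 2)) (j : Fin 2), v.length < k →
        ∃ i, v ∈ B i ∧ v ++ [j] ∈ B i) ∧
      (∀ i j l : Fin (n + 1), i ≤ j → j ≤ l →
        ∀ v, v ∈ B i → v ∈ B l → v ∈ B j) ∧
      (∀ i, (B i).card ≤ p + 1) := by
  have hpos : 0 < L.length := List.length_pos_iff.mpr hne
  refine ⟨L.length - 1, fun i => L[(i : ℕ)]'(by have := i.isLt; omega),
    ?_, ?_, ?_, ?_, ?_⟩
  · intro i w hw
    exact hsub _ (List.getElem_mem _) w hw
  · intro w hw
    obtain ⟨S, hS, hmem⟩ := hcov w hw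
    obtain ⟨i, hi, hEq⟩ := List.mem_iff_getElem.mp hS
    exact ⟨⟨i, by omega⟩, hEq.symm ▸ hmem⟩
  · intro w j hw
    obtain ⟨S, hS, hm1, hm2⟩ := hedge w j hw
    obtain ⟨i, hi, hEq⟩ := List.mem_iff_getElem.mp hS
    exact ⟨⟨i, by omega⟩, hEq.symm ▸ hm1, hEq.symm ▸ hm2⟩
  · intro i j l hij hjl w hwi hwl
    exact hcx w i j l hij hjl (by have := l.isLt; omega) hwi hwl
  · intro i
    exact hcard _ (List.getElem_mem _)

end Assemble

/-- The pathwidth of the full binary tree of depth `k` (nodes: binary strings of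
length at most `k`, edges from `v` to `v ++ [j]`) is exactly `⌈k/2⌉`: the least
`p` admitting a path decomposition with all bags of size at most `p + 1` is
`(k + 1) / 2`. -/
theorem pathwidth_full_binary_tree (k : ℕ) :
    IsLeast { p : ℕ |
      ∃ (n : ℕ) (B : Fin (n + 1) → Finset (List (Fin 2))),
        (∀ i, ∀ v ∈ B i, v.length ≤ k) ∧
        (∀ v : List (Fin 2), v.length ≤ k → ∃ i, v ∈ B i) ∧
        (∀ (v : List (Fin 2)) (j : Fin 2), v.length < k →
          ∃ i, v ∈ B i ∧ v ++ [j] ∈ B i) ∧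
        (∀ i j l : Fin (n + 1), i ≤ j → j ≤ l →
          ∀ v, v ∈ B i → v ∈ B l → v ∈ B j) ∧
        (∀ i, (B i).card ≤ p + 1) }
      ((k + 1) / 2) := by
  constructor
  · -- membership: the explicit decomposition
    simp only [Set.mem_setOf_eq]
    rcases Nat.even_or_odd k with ⟨m, hm⟩ | ⟨m, hm⟩
    · -- k = m + m
      subst hm
      have h2m : m + m = 2 * m := by omega
      refine assemble (Ebags m []) (Ebags_ne m []) ?_ ?_ ?_ (Ebags_cx m []) ?_
      · intro S hS w hw
        obtain ⟨s, rfl, hs⟩ := Ebags_sub m [] S hS w hw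
        try simp only [List.nil_append, List.length_append]
        omega
      · intro w hw
        obtain ⟨S, hS, hmem⟩ := Ebags_cover m [] w (by omega)
        exact ⟨S, hS, by simpa using hmem⟩
      · intro w j hw
        obtain ⟨S, hS, hm1, hm2⟩ := Ebags_edge m [] w j (by omega)
        exact ⟨S, hS, by simpa using hm1, by simpa using hm2⟩
      · intro S hS
        have := Ebags_card m [] S hS
        have h : (m + m + 1) / 2 = m := by omega
        omega
    · -- k = 2 * m + 1
      subst hm
      refine assemble (Obags m []) (Obags_ne m []) ?_ ?_ ?_
        (Obags_cx m [] (Ebags_cx m)) ?_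
      · intro S hS w hw
        obtain ⟨s, rfl, hs⟩ := Obags_sub m [] S hS w hw
        try simp only [List.nil_append, List.length_append]
        omega
      · intro w hw
        obtain ⟨S, hS, hmem⟩ := Obags_cover_aux m [] (Ebags_cover m) w (by omega)
        exact ⟨S, hS, by simpa using hmem⟩
      · intro w j hw
        obtain ⟨S, hS, hm1, hm2⟩ := Obags_edge_aux m [] (Ebags_edge m) w j (by omega)
        exact ⟨S, hS, by simpa using hm1, by simpa using hm2⟩
      · intro S hS
        have := Obags_card m [] S hS
        have h : (2 * m + 1 + 1) / 2 = m + 1 := by omega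
        omega
  · -- lower bound
    intro p hp
    simp only [Set.mem_setOf_eq] at hp
    obtain ⟨n, B, h1, h2, h3, h4, h5⟩ := hp
    obtain ⟨i, hi⟩ := lower_claim h2 h3 h4 k [] (by simp)
    have hle := hi.trans (Finset.card_le_card (Finset.filter_subset _ _))
    have := h5 i
    omega
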